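/- Suppose x_N = M. Then the function G_{M,N}, regarded as a function of v_M, satisfies the quasi-periodicities G_{M,N}(u₁,…,u_N|v₁,…,v_{M−1}, v_M + 2K₁/λ|x₁,…,x_N|a₁₂) = (-1)^N G_{M,N}(u₁,…,u_N|v₁,…,v_M|x₁,…,x_N|a₁₂) and G_{M,N}(u₁,…,u_N|v₁,…,v_{M−1}, v_M + 2iK₂/λ|x₁,…,x_N|a₁₂) = (-q^{-1})^N exp( -(iπλ/K₁)( N v_M − Σ_{j=1}^N u_j + a₁₂ + N + M − 2 ) ) G_{M,N}(u₁,…,u_N|v₁,…,v_M|x₁,…,x_N|a₁₂). -/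

import Mathlib

open Complex

noncomputable section

/-- The half period magnitude `K₁` for elliptic nome `q`. -/
def Kone (q : ℝ) : ℝ :=
  Real.pi / 2 * ∏' n : ℕ,
    ((1 + q ^ (2 * n + 1)) / (1 - q ^ (2 * n + 1)) *
      ((1 - q ^ (2 * n + 2)) / (1 + q ^ (2 * n + 2)))) ^ 2

/-- The half period magnitude `K₂` for elliptic nome `q`. -/
def Ktwo (q : ℝ) : ℝ := -(Kone q / Real.pi) * Real.log q

/-- The elliptic theta function `H`. -/
def theta (q : ℝ) (u : ℂ) : ℂ :=
  2 * (q : ℂ) ^ (1 / 4 : ℂ) * Complex.sin (Real.pi * u / (2 * (Kone q : ℂ))) *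
    ∏' n : ℕ,
      ((1 - 2 * (q : ℂ) ^ (2 * n + 2) * Complex.cos (Real.pi * u / (Kone q : ℂ)) +
          (q : ℂ) ^ (4 * n + 4)) * (1 - (q : ℂ) ^ (2 * n + 2)))

/-- The bracket `[u] = H(λu)`. -/
def brak (q : ℝ) (lam : ℂ) (u : ℂ) : ℂ := theta q (lam * u)

/-- `x^M_k`: equals `x_k` for `k = 1,…,N` and `M+1` for `k = N+1`. -/
def xM (M N : ℕ) (x : ℕ → ℕ) (k : ℕ) : ℕ := if k = N + 1 then M + 1 else x k

/-- The elliptic Schur-type symmetric function `E_{M,N}`. -/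
def ellE (q : ℝ) (lam : ℂ) (M N : ℕ) (u v : ℕ → ℂ) (x : ℕ → ℕ) (a12 : ℂ) : ℂ :=
  (∏ k ∈ Finset.Icc 1 N, ∏ j ∈ Finset.Icc (xM M N x k) (xM M N x (k + 1) - 2),
      brak q lam (a12 + (j : ℂ) + (N : ℂ)) / brak q lam (a12 + (j : ℂ) + (N : ℂ) - (k : ℂ))) *
  ∑ σ : Equiv.Perm (Fin N),
    (∏ j : Fin N, ∏ k : Fin N,
        if (j : ℕ) < (k : ℕ) then
          brak q lam 1 / brak q lam (u ((σ j : ℕ) + 1) - u ((σ k : ℕ) + 1))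
        else 1) *
    (∏ j : Fin N, ∏ k ∈ Finset.Icc (x ((j : ℕ) + 1) + 1) M,
        brak q lam (u ((σ j : ℕ) + 1) - v k) / brak q lam 1) *
    (∏ j : Fin N,
        brak q lam (-u ((σ j : ℕ) + 1) + v (x ((j : ℕ) + 1)) + a12 +
            (x ((j : ℕ) + 1) : ℂ) + (N : ℂ) - 2) /
          brak q lam (a12 + (x ((j : ℕ) + 1) : ℂ) + (N : ℂ) - 2)) *
    (∏ j : Fin N, ∏ k ∈ Finset.Icc 1 (x ((j : ℕ) + 1) - 1),
        brak q lam (1 + u ((σ j : ℕ) + 1) - v k) / brak q lam 1)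

/-- `G_{M,N}`: the product of the elliptic factors and `E_{M,N}`. -/
def ellG (q : ℝ) (lam : ℂ) (M N : ℕ) (u v : ℕ → ℂ) (x : ℕ → ℕ) (a12 : ℂ) : ℂ :=
  (∏ j : Fin N, ∏ k : Fin N,
      if (j : ℕ) < (k : ℕ) then
        brak q lam (1 + u ((k : ℕ) + 1) - u ((j : ℕ) + 1)) / brak q lam 1
      else 1) *
  ellE q lam M N u v x a12



lemma hasProd_zero_of_eq_zero {f : ℕ → ℂ} {n₀ : ℕ} (h : f n₀ = 0) : HasProd f 0 := by
  have hev : (fun s : Finset ℕ => ∏ i ∈ s, f i) =ᶠ[Filter.atTop] (fun _ => (0:ℂ)) := by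
    filter_upwards [Filter.eventually_ge_atTop ({n₀} : Finset ℕ)] with s hs
    exact Finset.prod_eq_zero (hs (Finset.mem_singleton_self n₀)) h
  exact Filter.Tendsto.congr' hev.symm tendsto_const_nhds

lemma multipliable_one_add_geom (c : ℂ) {r : ℂ} (hr : ‖r‖ < 1) :
    Multipliable (fun n : ℕ => 1 + c * r ^ n) := by
  by_cases hzero : ∃ n, 1 + c * r ^ n = 0
  · obtain ⟨n₀, h⟩ := hzero
    exact (hasProd_zero_of_eq_zero h).multipliable
  push_neg at hzero
  have hsum : Summable (fun n : ℕ => c * r ^ n) :=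
    (summable_geometric_of_norm_lt_one hr).mul_left c
  have hlog : Summable (fun n : ℕ => Complex.log (1 + c * r ^ n)) := by
    have h0 : Filter.Tendsto (fun n : ℕ => c * r ^ n) Filter.atTop (nhds 0) :=
      hsum.tendsto_atTop_zero
    have hev : ∀ᶠ n : ℕ in Filter.atTop,
        ‖Complex.log (1 + c * r ^ n)‖ ≤ (3/2) * ‖c * r ^ n‖ := by
      filter_upwards [h0.eventually (Metric.ball_mem_nhds (0:ℂ) (by norm_num : (0:ℝ) < 1/2))]
        with n hn
      exact Complex.norm_log_one_add_half_le_self (le_of_lt (by simpa using hn))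
    exact Summable.of_norm_bounded_eventually_nat (hsum.norm.mul_left (3/2)) hev
  exact Complex.multipliable_of_summable_log hlog

lemma theta_shift2 (q : ℝ) (hq0 : 0 < q) (hq1 : q < 1) (hK : ((Kone q : ℂ)) ≠ 0) (w : ℂ) :
    theta q (w + 2 * I * (Ktwo q : ℂ)) =
      -(q : ℂ)⁻¹ * Complex.exp (-(I * (Real.pi : ℂ) * w / (Kone q : ℂ))) * theta q w := by
  unfold theta
  set K : ℂ := (Kone q : ℂ) with hKdef
  set Q : ℂ := (q : ℂ) with hQdef
  have hQ0 : Q ≠ 0 := by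
    simp only [hQdef, ne_eq, Complex.ofReal_eq_zero]; exact hq0.ne'
  set L : ℂ := (Real.log q : ℂ) with hLdef
  have hexpL : Complex.exp L = Q := by
    rw [hLdef, ← Complex.ofReal_exp, Real.exp_log hq0]
  have hpi : (Real.pi : ℂ) ≠ 0 := by
    simp only [ne_eq, Complex.ofReal_eq_zero]; exact Real.pi_ne_zero
  have hpiK2 : (Real.pi : ℂ) * (Ktwo q : ℂ) = -K * L := by
    rw [hKdef, hLdef]
    have h : (Real.pi : ℝ) * Ktwo q = -(Kone q) * Real.log q := by
      unfold Ktwo; field_simp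
    calc (Real.pi : ℂ) * (Ktwo q : ℂ) = ((Real.pi * Ktwo q : ℝ) : ℂ) := by push_cast; ring
      _ = ((-(Kone q) * Real.log q : ℝ) : ℂ) := by rw [h]
      _ = -(Kone q : ℂ) * (Real.log q : ℂ) := by push_cast; ring
  set z : ℂ := (Real.pi : ℂ) * w / (2 * K) with hz
  set S : ℂ := Complex.exp (z * I) with hS
  have hS0 : S ≠ 0 := Complex.exp_ne_zero _
  have hargS : (Real.pi : ℂ) * (w + 2 * I * (Ktwo q : ℂ)) / (2 * K) = z - I * L := by
    rw [hz]; field_simp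
    linear_combination (2 * I) * hpiK2
  have hargC : (Real.pi : ℂ) * (w + 2 * I * (Ktwo q : ℂ)) / K = 2 * z - 2 * (I * L) := by
    rw [hz]; field_simp
    linear_combination (2 * I) * hpiK2
  have hargC0 : (Real.pi : ℂ) * w / K = 2 * z := by
    rw [hz]; field_simp
  have hsin : Complex.sin z = (S⁻¹ - S) * I / 2 := by
    rw [hS]
    simp only [Complex.sin, neg_mul, Complex.exp_neg]
  have hsin' : Complex.sin (z - I * L) = (S⁻¹ * Q⁻¹ - S * Q) * I / 2 := by
    have e1 : -(z - I * L) * I = -(z * I) + -L := by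
      linear_combination L * Complex.I_mul_I
    have e2 : (z - I * L) * I = z * I + L := by
      linear_combination (-L) * Complex.I_mul_I
    simp only [Complex.sin]
    rw [e1, e2, Complex.exp_add, Complex.exp_add, Complex.exp_neg, Complex.exp_neg, hexpL, hS]
  have hcos0 : Complex.cos (2 * z) = (S ^ 2 + S⁻¹ ^ 2) / 2 := by
    have e1 : (2 * z) * I = z * I + z * I := by ring
    have e2 : -(2 * z) * I = -(z * I) + -(z * I) := by ring
    simp only [Complex.cos]
    rw [e1, e2, Complex.exp_add, Complex.exp_add, Complex.exp_neg, hS]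
    ring
  have hcos' : Complex.cos (2 * z - 2 * (I * L)) = (S ^ 2 * Q ^ 2 + S⁻¹ ^ 2 * Q⁻¹ ^ 2) / 2 := by
    have e1 : (2 * z - 2 * (I * L)) * I = (z * I + z * I) + (L + L) := by
      linear_combination (-2 * L) * Complex.I_mul_I
    have e2 : -(2 * z - 2 * (I * L)) * I = (-(z * I) + -(z * I)) + (-L + -L) := by
      linear_combination (2 * L) * Complex.I_mul_I
    simp only [Complex.cos]
    rw [e1, e2]
    simp only [Complex.exp_add, Complex.exp_neg, hexpL, ← hS]
    ring
  have hr : ‖Q ^ 2‖ < 1 := by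
    rw [hQdef]
    have : ‖((q : ℝ) : ℂ)‖ = q := by
      rw [Complex.norm_real]; exact abs_of_pos hq0
    rw [norm_pow, this]
    nlinarith
  have mA := multipliable_one_add_geom (-(Q ^ 2 * S ^ 2)) hr
  have mB := multipliable_one_add_geom (-(Q ^ 2 * S⁻¹ ^ 2)) hr
  have mBp := multipliable_one_add_geom (-(S⁻¹ ^ 2)) hr
  have mC := multipliable_one_add_geom (-(Q ^ 2)) hr
  have mAs := multipliable_one_add_geom (-(Q ^ 4 * S ^ 2)) hr
  have horig : ∀ n : ℕ,
      (1 - 2 * Q ^ (2 * n + 2) * Complex.cos ((Real.pi : ℂ) * w / K) + Q ^ (4 * n + 4)) *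
        (1 - Q ^ (2 * n + 2)) =
      (1 + (-(Q ^ 2 * S ^ 2)) * (Q ^ 2) ^ n) *
        ((1 + (-(Q ^ 2 * S⁻¹ ^ 2)) * (Q ^ 2) ^ n) * (1 + (-(Q ^ 2)) * (Q ^ 2) ^ n)) := by
    intro n
    rw [hargC0, hcos0]
    field_simp
    ring
  have hshift : ∀ n : ℕ,
      (1 - 2 * Q ^ (2 * n + 2) * Complex.cos ((Real.pi : ℂ) * (w + 2 * I * (Ktwo q : ℂ)) / K) +
          Q ^ (4 * n + 4)) * (1 - Q ^ (2 * n + 2)) =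
      (1 + (-(Q ^ 4 * S ^ 2)) * (Q ^ 2) ^ n) *
        ((1 + (-(S⁻¹ ^ 2)) * (Q ^ 2) ^ n) * (1 + (-(Q ^ 2)) * (Q ^ 2) ^ n)) := by
    intro n
    rw [hargC, hcos']
    field_simp
    ring
  have hP1 : (∏' n : ℕ, ((1 + (-(Q ^ 2 * S ^ 2)) * (Q ^ 2) ^ n) *
        ((1 + (-(Q ^ 2 * S⁻¹ ^ 2)) * (Q ^ 2) ^ n) * (1 + (-(Q ^ 2)) * (Q ^ 2) ^ n)))) =
      (∏' n : ℕ, (1 + (-(Q ^ 2 * S ^ 2)) * (Q ^ 2) ^ n)) *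
        ((∏' n : ℕ, (1 + (-(Q ^ 2 * S⁻¹ ^ 2)) * (Q ^ 2) ^ n)) *
          (∏' n : ℕ, (1 + (-(Q ^ 2)) * (Q ^ 2) ^ n))) := by
    rw [Multipliable.tprod_mul mA (mB.mul mC), Multipliable.tprod_mul mB mC]
  have hP2 : (∏' n : ℕ, ((1 + (-(Q ^ 4 * S ^ 2)) * (Q ^ 2) ^ n) *
        ((1 + (-(S⁻¹ ^ 2)) * (Q ^ 2) ^ n) * (1 + (-(Q ^ 2)) * (Q ^ 2) ^ n)))) =
      (∏' n : ℕ, (1 + (-(Q ^ 4 * S ^ 2)) * (Q ^ 2) ^ n)) *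
        ((∏' n : ℕ, (1 + (-(S⁻¹ ^ 2)) * (Q ^ 2) ^ n)) *
          (∏' n : ℕ, (1 + (-(Q ^ 2)) * (Q ^ 2) ^ n))) := by
    rw [Multipliable.tprod_mul mAs (mBp.mul mC), Multipliable.tprod_mul mBp mC]
  have hA : (∏' n : ℕ, (1 + (-(Q ^ 2 * S ^ 2)) * (Q ^ 2) ^ n)) =
      (1 + (-(Q ^ 2 * S ^ 2))) * ∏' n : ℕ, (1 + (-(Q ^ 4 * S ^ 2)) * (Q ^ 2) ^ n) := by
    have hcg : ∀ n : ℕ, (1 + (-(Q ^ 2 * S ^ 2)) * (Q ^ 2) ^ (n + 1)) =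
        (1 + (-(Q ^ 4 * S ^ 2)) * (Q ^ 2) ^ n) := fun n => by ring
    rw [tprod_eq_zero_mul' (mAs.congr (fun n => (hcg n).symm)), tprod_congr hcg]
    norm_num
  have hBp : (∏' n : ℕ, (1 + (-(S⁻¹ ^ 2)) * (Q ^ 2) ^ n)) =
      (1 + (-(S⁻¹ ^ 2))) * ∏' n : ℕ, (1 + (-(Q ^ 2 * S⁻¹ ^ 2)) * (Q ^ 2) ^ n) := by
    have hcg : ∀ n : ℕ, (1 + (-(S⁻¹ ^ 2)) * (Q ^ 2) ^ (n + 1)) =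
        (1 + (-(Q ^ 2 * S⁻¹ ^ 2)) * (Q ^ 2) ^ n) := fun n => by ring
    rw [tprod_eq_zero_mul' (mB.congr (fun n => (hcg n).symm)), tprod_congr hcg]
    norm_num
  have hE : Complex.exp (-(I * (Real.pi : ℂ) * w / K)) = S⁻¹ ^ 2 := by
    have e : -(I * (Real.pi : ℂ) * w / K) = -(z * I) + -(z * I) := by
      rw [hz]; field_simp; ring
    rw [e, Complex.exp_add, Complex.exp_neg, hS]; ring
  have hscal : ((S⁻¹ * Q⁻¹ - S * Q) * I / 2) * (1 + (-(S⁻¹ ^ 2))) =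
      -Q⁻¹ * (S⁻¹ ^ 2) * ((S⁻¹ - S) * I / 2) * (1 + (-(Q ^ 2 * S ^ 2))) := by
    field_simp
    ring
  rw [hargS, hsin', tprod_congr hshift, hP2, hBp, hsin, tprod_congr horig, hP1, hA, hE]
  linear_combination (2 * Q ^ ((1:ℂ)/4) *
      (∏' n : ℕ, (1 + (-(Q ^ 4 * S ^ 2)) * (Q ^ 2) ^ n)) *
      (∏' n : ℕ, (1 + (-(Q ^ 2 * S⁻¹ ^ 2)) * (Q ^ 2) ^ n)) *
      (∏' n : ℕ, (1 + (-(Q ^ 2)) * (Q ^ 2) ^ n))) * hscal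

lemma theta_shift1 (q : ℝ) (hK : ((Kone q : ℂ)) ≠ 0) (w : ℂ) :
    theta q (w + 2 * (Kone q : ℂ)) = -theta q w := by
  have h1 : (Real.pi : ℂ) * (w + 2 * (Kone q : ℂ)) / (2 * (Kone q : ℂ)) =
      (Real.pi : ℂ) * w / (2 * (Kone q : ℂ)) + (Real.pi : ℂ) := by
    field_simp
  have h2 : (Real.pi : ℂ) * (w + 2 * (Kone q : ℂ)) / ((Kone q : ℂ)) =
      (Real.pi : ℂ) * w / ((Kone q : ℂ)) + 2 * (Real.pi : ℂ) := by
    field_simp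
  unfold theta
  rw [h1, Complex.sin_add_pi]
  rw [tprod_congr (f := fun n : ℕ =>
      ((1 - 2 * (q : ℂ) ^ (2 * n + 2) *
          Complex.cos ((Real.pi : ℂ) * (w + 2 * (Kone q : ℂ)) / ((Kone q : ℂ))) +
          (q : ℂ) ^ (4 * n + 4)) * (1 - (q : ℂ) ^ (2 * n + 2))))
    (g := fun n : ℕ =>
      ((1 - 2 * (q : ℂ) ^ (2 * n + 2) * Complex.cos ((Real.pi : ℂ) * w / ((Kone q : ℂ))) +
          (q : ℂ) ^ (4 * n + 4)) * (1 - (q : ℂ) ^ (2 * n + 2))))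
    (fun n => by rw [h2, Complex.cos_add_two_pi])]
  ring

lemma theta_shift1' (q : ℝ) (hK : ((Kone q : ℂ)) ≠ 0) (w : ℂ) :
    theta q (w - 2 * (Kone q : ℂ)) = -theta q w := by
  have h := theta_shift1 q hK (w - 2 * (Kone q : ℂ))
  rw [sub_add_cancel] at h
  rw [h, neg_neg]

lemma theta_shift2' (q : ℝ) (hq0 : 0 < q) (hq1 : q < 1) (hK : ((Kone q : ℂ)) ≠ 0) (w : ℂ) :
    theta q (w - 2 * I * (Ktwo q : ℂ)) =
      -(q : ℂ)⁻¹ * Complex.exp (I * (Real.pi : ℂ) * w / (Kone q : ℂ)) * theta q w := by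
  have hQ0 : (q : ℂ) ≠ 0 := by
    simp only [ne_eq, Complex.ofReal_eq_zero]; exact hq0.ne'
  have hexpL : Complex.exp ((Real.log q : ℂ)) = (q : ℂ) := by
    rw [← Complex.ofReal_exp, Real.exp_log hq0]
  have hpi : (Real.pi : ℂ) ≠ 0 := by
    simp only [ne_eq, Complex.ofReal_eq_zero]; exact Real.pi_ne_zero
  have hpiK2 : (Real.pi : ℂ) * (Ktwo q : ℂ) = -(Kone q : ℂ) * (Real.log q : ℂ) := by
    have h : (Real.pi : ℝ) * Ktwo q = -(Kone q) * Real.log q := by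
      unfold Ktwo; field_simp
    calc (Real.pi : ℂ) * (Ktwo q : ℂ) = ((Real.pi * Ktwo q : ℝ) : ℂ) := by push_cast; ring
      _ = ((-(Kone q) * Real.log q : ℝ) : ℂ) := by rw [h]
      _ = -(Kone q : ℂ) * (Real.log q : ℂ) := by push_cast; ring
  have h := theta_shift2 q hq0 hq1 hK (w - 2 * I * (Ktwo q : ℂ))
  rw [sub_add_cancel] at h
  have he : Complex.exp (I * (Real.pi : ℂ) * w / (Kone q : ℂ)) *
      Complex.exp (-(I * (Real.pi : ℂ) * (w - 2 * I * (Ktwo q : ℂ)) / (Kone q : ℂ))) =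
      (q : ℂ) ^ 2 := by
    rw [← Complex.exp_add]
    have harg : I * (Real.pi : ℂ) * w / (Kone q : ℂ) +
        -(I * (Real.pi : ℂ) * (w - 2 * I * (Ktwo q : ℂ)) / (Kone q : ℂ)) =
        (Real.log q : ℂ) + (Real.log q : ℂ) := by
      field_simp
      linear_combination (2 * I * I) * hpiK2 +
        (2 * (Real.pi : ℂ) * (Ktwo q : ℂ) - 2 * (Kone q : ℂ) * (Real.log q : ℂ)
          - 2 * (Real.pi : ℂ) * (Ktwo q : ℂ)) * Complex.I_mul_I
    rw [harg, Complex.exp_add, hexpL]; ring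
  have hc : (-(q : ℂ)⁻¹ * Complex.exp (I * (Real.pi : ℂ) * w / (Kone q : ℂ))) *
      (-(q : ℂ)⁻¹ *
        Complex.exp (-(I * (Real.pi : ℂ) * (w - 2 * I * (Ktwo q : ℂ)) / (Kone q : ℂ)))) = 1 := by
    rw [show (-(q : ℂ)⁻¹ * Complex.exp (I * (Real.pi : ℂ) * w / (Kone q : ℂ))) *
      (-(q : ℂ)⁻¹ *
        Complex.exp (-(I * (Real.pi : ℂ) * (w - 2 * I * (Ktwo q : ℂ)) / (Kone q : ℂ)))) =
      (q : ℂ)⁻¹ * (q : ℂ)⁻¹ * (Complex.exp (I * (Real.pi : ℂ) * w / (Kone q : ℂ)) *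
        Complex.exp (-(I * (Real.pi : ℂ) * (w - 2 * I * (Ktwo q : ℂ)) / (Kone q : ℂ)))) by ring,
      he]
    field_simp
  rw [h]
  linear_combination (-(theta q (w - 2 * I * (Ktwo q : ℂ)))) * hc

lemma Kone_ne_zero_of_brak (q : ℝ) (lam : ℂ) (hbr1 : brak q lam 1 ≠ 0) :
    ((Kone q : ℂ)) ≠ 0 := by
  intro h
  apply hbr1
  unfold brak theta
  rw [h]
  simp

lemma brak_shift1_plus (q : ℝ) (lam : ℂ) (hK : ((Kone q : ℂ)) ≠ 0) (hlam : lam ≠ 0) (w : ℂ) :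
    brak q lam (w + 2 * (Kone q : ℂ) / lam) =
      (-1) * Complex.exp ((0 : ℂ) * w) * brak q lam w := by
  unfold brak
  rw [show lam * (w + 2 * (Kone q : ℂ) / lam) = lam * w + 2 * (Kone q : ℂ) by
    field_simp]
  rw [theta_shift1 q hK]
  simp

lemma brak_shift1_minus (q : ℝ) (lam : ℂ) (hK : ((Kone q : ℂ)) ≠ 0) (hlam : lam ≠ 0) (w : ℂ) :
    brak q lam (w - 2 * (Kone q : ℂ) / lam) =
      (-1) * Complex.exp (-((0 : ℂ) * w)) * brak q lam w := by
  unfold brak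
  rw [show lam * (w - 2 * (Kone q : ℂ) / lam) = lam * w - 2 * (Kone q : ℂ) by
    field_simp]
  rw [theta_shift1' q hK]
  simp

lemma brak_shift2_plus (q : ℝ) (lam : ℂ) (hq0 : 0 < q) (hq1 : q < 1)
    (hK : ((Kone q : ℂ)) ≠ 0) (hlam : lam ≠ 0) (w : ℂ) :
    brak q lam (w + 2 * I * (Ktwo q : ℂ) / lam) =
      (-(q : ℂ)⁻¹) * Complex.exp ((-(I * (Real.pi : ℂ) * lam / (Kone q : ℂ))) * w) *
        brak q lam w := by
  unfold brak
  rw [show lam * (w + 2 * I * (Ktwo q : ℂ) / lam) = lam * w + 2 * I * (Ktwo q : ℂ) by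
    field_simp]
  rw [theta_shift2 q hq0 hq1 hK (lam * w)]
  rw [show (-(I * (Real.pi : ℂ) * lam / (Kone q : ℂ))) * w =
    -(I * (Real.pi : ℂ) * (lam * w) / (Kone q : ℂ)) by ring]

lemma brak_shift2_minus (q : ℝ) (lam : ℂ) (hq0 : 0 < q) (hq1 : q < 1)
    (hK : ((Kone q : ℂ)) ≠ 0) (hlam : lam ≠ 0) (w : ℂ) :
    brak q lam (w - 2 * I * (Ktwo q : ℂ) / lam) =
      (-(q : ℂ)⁻¹) * Complex.exp (-((-(I * (Real.pi : ℂ) * lam / (Kone q : ℂ))) * w)) *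
        brak q lam w := by
  unfold brak
  rw [show lam * (w - 2 * I * (Ktwo q : ℂ) / lam) = lam * w - 2 * I * (Ktwo q : ℂ) by
    field_simp]
  rw [theta_shift2' q hq0 hq1 hK (lam * w)]
  rw [show -((-(I * (Real.pi : ℂ) * lam / (Kone q : ℂ))) * w) =
    I * (Real.pi : ℂ) * (lam * w) / (Kone q : ℂ) by ring]

lemma prod_Icc_top_split {M a : ℕ} (ha : a ≤ M) (hM : 1 ≤ M) (g : ℕ → ℂ) :
    ∏ k ∈ Finset.Icc a M, g k = (∏ k ∈ Finset.Icc a (M - 1), g k) * g M := by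
  obtain ⟨M', rfl⟩ : ∃ M', M = M' + 1 := ⟨M - 1, by omega⟩
  rw [Nat.add_sub_cancel, Finset.prod_Icc_succ_top (by omega)]

lemma key_update (q : ℝ) (lam : ℂ) (M N : ℕ) (hN : 1 ≤ N) (hNM : N ≤ M)
    (u v : ℕ → ℂ) (x : ℕ → ℕ)
    (hxmono : ∀ j k, 1 ≤ j → j < k → k ≤ N → x j < x k) (hxN : x N = M) (a12 : ℂ)
    (s c d : ℂ)
    (hplus : ∀ w, brak q lam (w + s) = c * Complex.exp (d * w) * brak q lam w)
    (hminus : ∀ w, brak q lam (w - s) = c * Complex.exp (-(d * w)) * brak q lam w) :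
    ellG q lam M N u (Function.update v M (v M + s)) x a12 =
      c ^ N * Complex.exp (d * ((N : ℂ) * v M - (∑ j ∈ Finset.Icc 1 N, u j) + a12 +
          (N : ℂ) + (M : ℂ) - 2)) *
        ellG q lam M N u v x a12 := by
  have hM1 : 1 ≤ M := le_trans hN hNM
  have hxlt : ∀ j : Fin N, (j : ℕ) + 1 ≠ N → x ((j : ℕ) + 1) < M := by
    intro j hj
    have hlt : (j : ℕ) + 1 < N := by have := j.isLt; omega
    have := hxmono ((j : ℕ) + 1) N (by omega) hlt le_rfl
    omega
  have hxle : ∀ j : Fin N, x ((j : ℕ) + 1) ≤ M := by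
    intro j
    by_cases hj : (j : ℕ) + 1 = N
    · rw [hj, hxN]
    · exact (hxlt j hj).le
  have hterm : ∀ σ : Equiv.Perm (Fin N),
      (∏ j : Fin N, ∏ k : Fin N,
          if (j : ℕ) < (k : ℕ) then
            brak q lam 1 / brak q lam (u ((σ j : ℕ) + 1) - u ((σ k : ℕ) + 1))
          else 1) *
      (∏ j : Fin N, ∏ k ∈ Finset.Icc (x ((j : ℕ) + 1) + 1) M,
          brak q lam (u ((σ j : ℕ) + 1) - Function.update v M (v M + s) k) / brak q lam 1) *
      (∏ j : Fin N,
          brak q lam (-u ((σ j : ℕ) + 1) + Function.update v M (v M + s) (x ((j : ℕ) + 1)) + a12 +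
              (x ((j : ℕ) + 1) : ℂ) + (N : ℂ) - 2) /
            brak q lam (a12 + (x ((j : ℕ) + 1) : ℂ) + (N : ℂ) - 2)) *
      (∏ j : Fin N, ∏ k ∈ Finset.Icc 1 (x ((j : ℕ) + 1) - 1),
          brak q lam (1 + u ((σ j : ℕ) + 1) - Function.update v M (v M + s) k) / brak q lam 1) =
      (c ^ N * Complex.exp (d * ((N : ℂ) * v M - (∑ j ∈ Finset.Icc 1 N, u j) + a12 +
          (N : ℂ) + (M : ℂ) - 2))) *
      ((∏ j : Fin N, ∏ k : Fin N,
          if (j : ℕ) < (k : ℕ) then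
            brak q lam 1 / brak q lam (u ((σ j : ℕ) + 1) - u ((σ k : ℕ) + 1))
          else 1) *
      (∏ j : Fin N, ∏ k ∈ Finset.Icc (x ((j : ℕ) + 1) + 1) M,
          brak q lam (u ((σ j : ℕ) + 1) - v k) / brak q lam 1) *
      (∏ j : Fin N,
          brak q lam (-u ((σ j : ℕ) + 1) + v (x ((j : ℕ) + 1)) + a12 +
              (x ((j : ℕ) + 1) : ℂ) + (N : ℂ) - 2) /
            brak q lam (a12 + (x ((j : ℕ) + 1) : ℂ) + (N : ℂ) - 2)) *
      (∏ j : Fin N, ∏ k ∈ Finset.Icc 1 (x ((j : ℕ) + 1) - 1),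
          brak q lam (1 + u ((σ j : ℕ) + 1) - v k) / brak q lam 1)) := by
    intro σ
    have hA : (∏ j : Fin N, ∏ k ∈ Finset.Icc (x ((j : ℕ) + 1) + 1) M,
          brak q lam (u ((σ j : ℕ) + 1) - Function.update v M (v M + s) k) / brak q lam 1) =
        (∏ j : Fin N, if (j : ℕ) + 1 = N then 1
            else c * Complex.exp (d * (v M - u ((σ j : ℕ) + 1)))) *
        (∏ j : Fin N, ∏ k ∈ Finset.Icc (x ((j : ℕ) + 1) + 1) M,
          brak q lam (u ((σ j : ℕ) + 1) - v k) / brak q lam 1) := by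
      rw [← Finset.prod_mul_distrib]
      refine Finset.prod_congr rfl fun j _ => ?_
      by_cases hj : (j : ℕ) + 1 = N
      · rw [if_pos hj]
        have hxM : x ((j : ℕ) + 1) = M := by rw [hj, hxN]
        rw [hxM, Finset.Icc_eq_empty (by omega), Finset.prod_empty, Finset.prod_empty, one_mul]
      · rw [if_neg hj]
        have hlt : x ((j : ℕ) + 1) < M := hxlt j hj
        rw [prod_Icc_top_split (by omega) hM1, prod_Icc_top_split (by omega) hM1]
        have h1 : (∏ k ∈ Finset.Icc (x ((j : ℕ) + 1) + 1) (M - 1),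
            brak q lam (u ((σ j : ℕ) + 1) - Function.update v M (v M + s) k) / brak q lam 1) =
            ∏ k ∈ Finset.Icc (x ((j : ℕ) + 1) + 1) (M - 1),
              brak q lam (u ((σ j : ℕ) + 1) - v k) / brak q lam 1 := by
          refine Finset.prod_congr rfl fun k hk => ?_
          rw [Function.update_of_ne (by have := (Finset.mem_Icc.mp hk).2; omega)]
        have h2 : brak q lam (u ((σ j : ℕ) + 1) - Function.update v M (v M + s) M) =
            c * Complex.exp (d * (v M - u ((σ j : ℕ) + 1))) *
              brak q lam (u ((σ j : ℕ) + 1) - v M) := by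
          rw [Function.update_self,
            show u ((σ j : ℕ) + 1) - (v M + s) = (u ((σ j : ℕ) + 1) - v M) - s by ring,
            hminus,
            show -(d * (u ((σ j : ℕ) + 1) - v M)) = d * (v M - u ((σ j : ℕ) + 1)) by ring]
        rw [h1, h2]
        ring
    have hB : (∏ j : Fin N,
          brak q lam (-u ((σ j : ℕ) + 1) + Function.update v M (v M + s) (x ((j : ℕ) + 1)) + a12 +
              (x ((j : ℕ) + 1) : ℂ) + (N : ℂ) - 2) /
            brak q lam (a12 + (x ((j : ℕ) + 1) : ℂ) + (N : ℂ) - 2)) =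
        (∏ j : Fin N, if (j : ℕ) + 1 = N then
            c * Complex.exp (d * (v M - u ((σ j : ℕ) + 1) + (a12 + (M : ℂ) + (N : ℂ) - 2)))
          else 1) *
        (∏ j : Fin N,
          brak q lam (-u ((σ j : ℕ) + 1) + v (x ((j : ℕ) + 1)) + a12 +
              (x ((j : ℕ) + 1) : ℂ) + (N : ℂ) - 2) /
            brak q lam (a12 + (x ((j : ℕ) + 1) : ℂ) + (N : ℂ) - 2)) := by
      rw [← Finset.prod_mul_distrib]
      refine Finset.prod_congr rfl fun j _ => ?_
      by_cases hj : (j : ℕ) + 1 = N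
      · rw [if_pos hj]
        have hxM : x ((j : ℕ) + 1) = M := by rw [hj, hxN]
        rw [hxM, Function.update_self,
          show -u ((σ j : ℕ) + 1) + (v M + s) + a12 + (M : ℂ) + (N : ℂ) - 2 =
            (-u ((σ j : ℕ) + 1) + v M + a12 + (M : ℂ) + (N : ℂ) - 2) + s by ring,
          hplus,
          show d * (-u ((σ j : ℕ) + 1) + v M + a12 + (M : ℂ) + (N : ℂ) - 2) =
            d * (v M - u ((σ j : ℕ) + 1) + (a12 + (M : ℂ) + (N : ℂ) - 2)) by ring]
        ring
      · rw [if_neg hj, Function.update_of_ne (by have := hxlt j hj; omega), one_mul]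
    have hC : (∏ j : Fin N, ∏ k ∈ Finset.Icc 1 (x ((j : ℕ) + 1) - 1),
          brak q lam (1 + u ((σ j : ℕ) + 1) - Function.update v M (v M + s) k) / brak q lam 1) =
        (∏ j : Fin N, ∏ k ∈ Finset.Icc 1 (x ((j : ℕ) + 1) - 1),
          brak q lam (1 + u ((σ j : ℕ) + 1) - v k) / brak q lam 1) := by
      refine Finset.prod_congr rfl fun j _ => Finset.prod_congr rfl fun k hk => ?_
      have hkM : k ≠ M := by
        have h1 := (Finset.mem_Icc.mp hk).2
        have h2 := hxle j
        omega
      rw [Function.update_of_ne hkM]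
    have hD : (∏ j : Fin N, if (j : ℕ) + 1 = N then 1
            else c * Complex.exp (d * (v M - u ((σ j : ℕ) + 1)))) *
        (∏ j : Fin N, if (j : ℕ) + 1 = N then
            c * Complex.exp (d * (v M - u ((σ j : ℕ) + 1) + (a12 + (M : ℂ) + (N : ℂ) - 2)))
          else 1) =
        c ^ N * Complex.exp (d * ((N : ℂ) * v M - (∑ j ∈ Finset.Icc 1 N, u j) + a12 +
          (N : ℂ) + (M : ℂ) - 2)) := by
      rw [← Finset.prod_mul_distrib]
      have hg : ∀ j : Fin N,
          (if (j : ℕ) + 1 = N then 1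
            else c * Complex.exp (d * (v M - u ((σ j : ℕ) + 1)))) *
          (if (j : ℕ) + 1 = N then
            c * Complex.exp (d * (v M - u ((σ j : ℕ) + 1) + (a12 + (M : ℂ) + (N : ℂ) - 2)))
          else 1) =
          c * Complex.exp (d * (v M - u ((σ j : ℕ) + 1)) +
            (if (j : ℕ) + 1 = N then d * (a12 + (M : ℂ) + (N : ℂ) - 2) else 0)) := by
        intro j
        by_cases hj : (j : ℕ) + 1 = N
        · rw [if_pos hj, if_pos hj, if_pos hj, one_mul,
            show d * (v M - u ((σ j : ℕ) + 1) + (a12 + (M : ℂ) + (N : ℂ) - 2)) =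
              d * (v M - u ((σ j : ℕ) + 1)) + d * (a12 + (M : ℂ) + (N : ℂ) - 2) by ring]
        · rw [if_neg hj, if_neg hj, if_neg hj, mul_one, add_zero]
      rw [Finset.prod_congr rfl (fun j _ => hg j), Finset.prod_mul_distrib,
        Finset.prod_const, Finset.card_univ, Fintype.card_fin, ← Complex.exp_sum]
      congr 1
      rw [Finset.sum_add_distrib]
      have hite : (∑ j : Fin N,
          if (j : ℕ) + 1 = N then d * (a12 + (M : ℂ) + (N : ℂ) - 2) else 0) =
          d * (a12 + (M : ℂ) + (N : ℂ) - 2) := by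
        have hcond : ∀ j : Fin N, ((j : ℕ) + 1 = N) = (j = (⟨N - 1, by omega⟩ : Fin N)) := by
          intro j
          apply propext
          constructor
          · intro h; exact Fin.ext (show (j : ℕ) = N - 1 by omega)
          · intro h; subst h; exact Nat.succ_pred_eq_of_pos hN
        simp_rw [hcond]
        rw [Finset.sum_ite_eq' Finset.univ ((⟨N - 1, by omega⟩ : Fin N))]
        simp
      have hsumu : (∑ j : Fin N, u ((σ j : ℕ) + 1)) = ∑ j ∈ Finset.Icc 1 N, u j := by
        rw [Equiv.sum_comp σ (fun j : Fin N => u ((j : ℕ) + 1)),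
          Fin.sum_univ_eq_sum_range (fun j => u (j + 1)) N,
          ← Finset.Ico_add_one_right_eq_Icc, Finset.sum_Ico_eq_sum_range]
        refine Finset.sum_congr (by norm_num) fun i _ => by rw [Nat.add_comm]
      have hlin : (∑ j : Fin N, d * (v M - u ((σ j : ℕ) + 1))) =
          (N : ℂ) * (d * v M) - d * ∑ j ∈ Finset.Icc 1 N, u j := by
        rw [← Finset.mul_sum, Finset.sum_sub_distrib, Finset.sum_const, Finset.card_univ,
          Fintype.card_fin, nsmul_eq_mul, hsumu]
        ring
      rw [hite, hlin]
      ring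
    rw [hA, hB, hC, ← hD]
    ring
  unfold ellG ellE
  rw [Finset.sum_congr rfl (fun σ _ => hterm σ), ← Finset.mul_sum]
  ring


/-- if `x_N = M`, the function `G_{M,N}`, regarded as a function of `v_M`,
satisfies the quasi-periodicities
`G_{M,N}(…, v_M + 2K₁/λ, …) = (-1)^N G_{M,N}(…)` and
`G_{M,N}(…, v_M + 2iK₂/λ, …)
  = (-q⁻¹)^N exp(-(iπλ/K₁)(N v_M - Σ u_j + a₁₂ + N + M - 2)) G_{M,N}(…)`. -/
theorem statement14 (q : ℝ) (hq0 : 0 < q) (hq1 : q < 1) (lam : ℂ) (hlam : lam ≠ 0)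
    (M N : ℕ) (hN : 1 ≤ N) (hNM : N ≤ M)
    (u v : ℕ → ℂ) (x : ℕ → ℕ)
    (hx1 : 1 ≤ x 1) (hxmono : ∀ j k, 1 ≤ j → j < k → k ≤ N → x j < x k)
    (hxN : x N = M) (a12 : ℂ)
    (hbr1 : brak q lam 1 ≠ 0)
    (hbrA : ∀ n : ℤ, brak q lam (a12 + (n : ℂ)) ≠ 0)
    (hbrA' : ∀ n : ℤ, brak q lam (-a12 + (n : ℂ)) ≠ 0)
    (hu : ∀ j k, 1 ≤ j → j ≤ N → 1 ≤ k → k ≤ N → j ≠ k → brak q lam (u j - u k) ≠ 0) :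
    ellG q lam M N u (Function.update v M (v M + 2 * (Kone q : ℂ) / lam)) x a12 =
      (-1 : ℂ) ^ N * ellG q lam M N u v x a12 ∧
    ellG q lam M N u (Function.update v M (v M + 2 * Complex.I * (Ktwo q : ℂ) / lam)) x a12 =
      (-(q : ℂ)⁻¹) ^ N *
        Complex.exp (-(Complex.I * (Real.pi : ℂ) * lam / (Kone q : ℂ)) *
          ((N : ℂ) * v M - (∑ j ∈ Finset.Icc 1 N, u j) + a12 + (N : ℂ) + (M : ℂ) - 2)) *
        ellG q lam M N u v x a12 := by
  have hK : ((Kone q : ℂ)) ≠ 0 := Kone_ne_zero_of_brak q lam hbr1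
  constructor
  · have h := key_update q lam M N hN hNM u v x hxmono hxN a12
      (2 * (Kone q : ℂ) / lam) (-1) 0
      (fun w => brak_shift1_plus q lam hK hlam w)
      (fun w => brak_shift1_minus q lam hK hlam w)
    rw [h]
    simp
  · have h := key_update q lam M N hN hNM u v x hxmono hxN a12
      (2 * Complex.I * (Ktwo q : ℂ) / lam) (-(q : ℂ)⁻¹)
      (-(Complex.I * (Real.pi : ℂ) * lam / (Kone q : ℂ)))
      (fun w => brak_shift2_plus q lam hq0 hq1 hK hlam w)
      (fun w => brak_shift2_minus q lam hq0 hq1 hK hlam w)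
    rw [h]

end
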